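/- A free product of two residually finite groups is residually finite. -/

import Mathlib

/-- A group is residually finite if every nontrivial element avoids some
finite-index normal subgroup. -/
def ResiduallyFinite (G : Type*) [Group G] : Prop :=
  ∀ g : G, g ≠ 1 → ∃ N : Subgroup G, N.Normal ∧ N.FiniteIndex ∧ g ∉ N

set_option linter.unnecessarySimpa false
set_option linter.unusedSectionVars false

open Monoid CoprodI Equiv Function List

section Core

variable {ι : Type*} {G : ι → Type*} [∀ i, Group (G i)]
variable {n : ℕ} (idx : Fin n → ι) (g : ∀ k, G (idx k))
variable (N : ∀ k, Subgroup (G (idx k))) [∀ k, (N k).Normal]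

open scoped Classical

private noncomputable def nu (i : ι) :
    (Fin (n+1) ⊕ Σ k : Fin n, G (idx k) ⧸ N k) → (Fin (n+1) ⊕ Σ k : Fin n, G (idx k) ⧸ N k)
  | Sum.inl m =>
      if h1 : ∃ h : (m : ℕ) < n, idx ⟨m, h⟩ = i then
        Sum.inr ⟨⟨m, h1.choose⟩, QuotientGroup.mk (g ⟨m, h1.choose⟩)⟩
      else if h2 : ∃ h : (m : ℕ) - 1 < n, 0 < (m : ℕ) ∧ idx ⟨(m : ℕ) - 1, h⟩ = i then
        Sum.inr ⟨⟨(m : ℕ) - 1, h2.choose⟩, 1⟩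
      else Sum.inl m
  | Sum.inr ⟨k, q⟩ =>
      if idx k = i then
        if q = QuotientGroup.mk (g k) then Sum.inl k.castSucc
        else if q = 1 then Sum.inl k.succ
        else Sum.inr ⟨k, q⟩
      else Sum.inr ⟨k, q⟩

private lemma one_heq {k k' : Fin n} (h : k = k') :
    HEq (1 : G (idx k) ⧸ N k) (1 : G (idx k') ⧸ N k') := by subst h; rfl

variable (hg : ∀ k, g k ∉ N k)
variable (chain : ∀ (j : ℕ) (h : j + 1 < n), idx ⟨j+1, h⟩ ≠ idx ⟨j, Nat.lt_of_succ_lt h⟩)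

include hg chain in
private lemma nu_invol (i : ι) : Function.Involutive (nu idx g N i) := by
  have one_ne : ∀ k : Fin n, (1 : G (idx k) ⧸ N k) ≠ QuotientGroup.mk (g k) := by
    intro k heq
    exact hg k ((QuotientGroup.eq_one_iff _).mp heq.symm)
  rintro (m | ⟨k, q⟩)
  · rw [nu]
    split_ifs with h1 h2
    · rw [nu, if_pos h1.choose_spec, if_pos rfl]
      exact congrArg Sum.inl (Fin.ext (by simp))
    · rw [nu, if_pos h2.choose_spec.2, if_neg (one_ne _), if_pos rfl]
      refine congrArg Sum.inl (Fin.ext ?_)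
      have h0 := h2.choose_spec.1
      simp only [Fin.val_succ]
      omega
    · rw [nu, dif_neg h1, dif_neg h2]
  · rw [nu]
    split_ifs with hik hq h1
    · -- q = mk (g k), goes to inl k.castSucc
      subst hq
      have hc1 : ∃ h : ((k.castSucc : Fin (n+1)) : ℕ) < n, idx ⟨((k.castSucc : Fin (n+1)) : ℕ), h⟩ = i :=
        ⟨by simpa using k.isLt, by simpa using hik⟩
      rw [nu, dif_pos hc1]
      have hk : (⟨((k.castSucc : Fin (n+1)) : ℕ), hc1.choose⟩ : Fin n) = k := Fin.ext (by simp)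
      rw [hk]
    · -- q = 1, goes to inl k.succ
      subst h1
      have hc1 : ¬ ∃ h : ((k.succ : Fin (n+1)) : ℕ) < n, idx ⟨((k.succ : Fin (n+1)) : ℕ), h⟩ = i := by
        rintro ⟨h, hi⟩
        have h' : (k : ℕ) + 1 < n := by simpa using h
        apply chain k h'
        have he : (⟨(k : ℕ) + 1, h'⟩ : Fin n) = ⟨((k.succ : Fin (n+1)) : ℕ), h⟩ :=
          Fin.ext (by simp)
        rw [he, hi]
        exact hik.symm
      have hc2 : ∃ h : ((k.succ : Fin (n+1)) : ℕ) - 1 < n,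
          0 < ((k.succ : Fin (n+1)) : ℕ) ∧ idx ⟨((k.succ : Fin (n+1)) : ℕ) - 1, h⟩ = i := by
        refine ⟨by simp [k.isLt], by simp, ?_⟩
        have hk : (⟨((k.succ : Fin (n+1)) : ℕ) - 1, by simp [k.isLt]⟩ : Fin n) = k := Fin.ext (by simp)
        rw [hk, hik]
      rw [nu, dif_neg hc1, dif_pos hc2]
      have hk : (⟨((k.succ : Fin (n+1)) : ℕ) - 1, hc2.choose⟩ : Fin n) = k := Fin.ext (by simp)
      exact congrArg Sum.inr (Sigma.ext hk (one_heq idx N hk))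
    · rw [nu, if_pos hik, if_neg hq, if_neg h1]
    · rw [nu, if_neg hik]

private noncomputable def tau (i : ι) :
    Equiv.Perm (Fin (n+1) ⊕ Σ k : Fin n, G (idx k) ⧸ N k) :=
  Function.Involutive.toPerm _ (nu_invol idx g N hg chain i)

private lemma tau_apply (i : ι) (x) :
    tau idx g N hg chain i x = nu idx g N i x := rfl

private lemma tau_inv (i : ι) : (tau idx g N hg chain i)⁻¹ = tau idx g N hg chain i :=
  Equiv.ext fun _ => rfl

include hg chain in
private lemma tau_mk (k : Fin n) :
    tau idx g N hg chain (idx k) (Sum.inr ⟨k, QuotientGroup.mk (g k)⟩) = Sum.inl k.castSucc := by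
  rw [tau_apply, nu, if_pos rfl, if_pos rfl]

include hg chain in
private lemma tau_succ (k : Fin n) :
    tau idx g N hg chain (idx k) (Sum.inl k.succ) = Sum.inr ⟨k, 1⟩ := by
  rw [tau_apply]
  have hc1 : ¬ ∃ h : ((k.succ : Fin (n+1)) : ℕ) < n, idx ⟨((k.succ : Fin (n+1)) : ℕ), h⟩ = idx k := by
    rintro ⟨h, hi⟩
    have h' : (k : ℕ) + 1 < n := by simpa using h
    apply chain k h'
    have he : (⟨(k : ℕ) + 1, h'⟩ : Fin n) = ⟨((k.succ : Fin (n+1)) : ℕ), h⟩ :=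
      Fin.ext (by simp)
    rw [he, hi]
  have hc2 : ∃ h : ((k.succ : Fin (n+1)) : ℕ) - 1 < n,
      0 < ((k.succ : Fin (n+1)) : ℕ) ∧ idx ⟨((k.succ : Fin (n+1)) : ℕ) - 1, h⟩ = idx k := by
    refine ⟨by simp [k.isLt], by simp, ?_⟩
    have hk : (⟨((k.succ : Fin (n+1)) : ℕ) - 1, by simp [k.isLt]⟩ : Fin n) = k := Fin.ext (by simp)
    rw [hk]
  rw [nu, dif_neg hc1, dif_pos hc2]
  have hk : (⟨((k.succ : Fin (n+1)) : ℕ) - 1, hc2.choose⟩ : Fin n) = k := Fin.ext (by simp)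
  exact congrArg Sum.inr (Sigma.ext hk (one_heq idx N hk))

private def castHom {i j : ι} (h : i = j) : G i →* G j := h ▸ MonoidHom.id (G i)

private noncomputable def letterPerm (i : ι) (k : Fin n) :
    G i →* Equiv.Perm (G (idx k) ⧸ N k) :=
  if h : idx k = i then
    (MulAction.toPermHom (G (idx k)) (G (idx k) ⧸ N k)).comp (castHom h.symm)
  else 1

private noncomputable def sigmaHom (i : ι) :
    G i →* Equiv.Perm (Fin (n+1) ⊕ Σ k : Fin n, G (idx k) ⧸ N k) :=
  (Equiv.Perm.sumCongrHom _ _).comp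
    (MonoidHom.prod 1
      ((Equiv.Perm.sigmaCongrRightHom _).comp (Pi.monoidHom fun k => letterPerm idx N i k)))

private lemma letterPerm_self (k : Fin n) (a : G (idx k)) :
    letterPerm idx N (idx k) k a = MulAction.toPerm a := by
  rw [letterPerm, dif_pos rfl]
  rfl

private lemma sigmaHom_apply (k : Fin n) (a : G (idx k)) (q : G (idx k) ⧸ N k) :
    sigmaHom idx N (idx k) a (Sum.inr ⟨k, q⟩) = Sum.inr ⟨k, a • q⟩ := by
  have h : sigmaHom idx N (idx k) a (Sum.inr ⟨k, q⟩)
      = Sum.inr ⟨k, letterPerm idx N (idx k) k a q⟩ := rfl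
  rw [h, letterPerm_self]
  rfl

private noncomputable def alphaHom (i : ι) :
    G i →* Equiv.Perm (Fin (n+1) ⊕ Σ k : Fin n, G (idx k) ⧸ N k) :=
  ((MulAut.conj (tau idx g N hg chain i)).toMonoidHom).comp (sigmaHom idx N i)

include hg chain in
private lemma alpha_step (k : Fin n) :
    alphaHom idx g N hg chain (idx k) (g k) (Sum.inl k.succ) = Sum.inl k.castSucc := by
  show (tau idx g N hg chain (idx k) * sigmaHom idx N (idx k) (g k)
      * (tau idx g N hg chain (idx k))⁻¹) (Sum.inl k.succ) = _
  rw [tau_inv, Equiv.Perm.mul_apply, Equiv.Perm.mul_apply, tau_succ, sigmaHom_apply]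
  have : (g k) • (1 : G (idx k) ⧸ N k) = QuotientGroup.mk (g k) := by
    rw [← QuotientGroup.mk_one, MulAction.Quotient.smul_mk, smul_eq_mul, mul_one]
  rw [this, tau_mk]

include hg chain in
private lemma phi_eval (j m : ℕ) (hm : m + j = n) (hm' : m < n + 1) :
    Monoid.CoprodI.lift (fun i => alphaHom idx g N hg chain i)
      ((((List.finRange n).drop m).map fun k => Monoid.CoprodI.of (g k)).prod)
      (Sum.inl (Fin.last n)) = Sum.inl ⟨m, hm'⟩ := by
  induction j generalizing m with
  | zero =>
    have hmn : n = m := by omega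
    subst hmn
    rw [List.drop_of_length_le (le_of_eq (List.length_finRange (n := n)))]
    simp only [List.map_nil, List.prod_nil, map_one, Equiv.Perm.coe_one, id_eq]
    rfl
  | succ j ih =>
    have hmn : m < n := by omega
    have hdrop : (List.finRange n).drop m = ⟨m, hmn⟩ :: (List.finRange n).drop (m+1) := by
      rw [List.drop_eq_getElem_cons (by simpa using hmn)]
      congr 1
      exact Fin.ext (by simp)
    rw [hdrop, List.map_cons, List.prod_cons, map_mul, Equiv.Perm.mul_apply,
      ih (m+1) (by omega) (by omega), Monoid.CoprodI.lift_of]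
    have h1 : (⟨m+1, by omega⟩ : Fin (n+1)) = (⟨m, hmn⟩ : Fin n).succ := Fin.ext (by simp)
    have h2 : (⟨m, hm'⟩ : Fin (n+1)) = (⟨m, hmn⟩ : Fin n).castSucc := Fin.ext (by simp)
    rw [h1, h2]
    exact alpha_step idx g N hg chain ⟨m, hmn⟩

end Core

private lemma exists_perm_hom {ι : Type u} (G : ι → Type v) [∀ i, Group (G i)]
    (hRF : ∀ i, ∀ g : G i, g ≠ 1 → ∃ N : Subgroup (G i), N.Normal ∧ N.FiniteIndex ∧ g ∉ N)
    {x : Monoid.CoprodI G} (hx : x ≠ 1) :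
    ∃ (X : Type v) (_ : Finite X) (f : Monoid.CoprodI G →* Equiv.Perm X), f x ≠ 1 := by
  classical
  set w := Monoid.CoprodI.Word.equiv x with hw
  have hprod : Monoid.CoprodI.Word.prod w = x := Monoid.CoprodI.Word.equiv.symm_apply_apply x
  set l := w.toList with hl
  have hlne : l ≠ [] := by
    intro h
    apply hx
    rw [← hprod, Monoid.CoprodI.Word.prod, ← hl, h]
    simp
  set n := l.length with hn
  have hnpos : 0 < n := List.length_pos_iff.mpr hlne
  set idx : Fin n → ι := fun k => (l.get k).1 with hidx
  set g : ∀ k, G (idx k) := fun k => (l.get k).2 with hgdef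
  have hg1 : ∀ k, g k ≠ 1 := fun k => w.ne_one _ (List.get_mem l k)
  have hlen : w.toList.length = n := by rw [hn, hl]
  have chain : ∀ (j : ℕ) (h : j + 1 < n), idx ⟨j+1, h⟩ ≠ idx ⟨j, Nat.lt_of_succ_lt h⟩ := by
    intro j h hEq
    exact (List.isChain_iff_getElem.mp w.chain_ne j (by omega)) hEq.symm
  choose N hN1 hN2 hN3 using fun k => hRF (idx k) (g k) (hg1 k)
  haveI : ∀ k, (N k).Normal := hN1
  haveI : ∀ k, Finite (G (idx k) ⧸ N k) := fun k =>
    Nat.finite_of_card_ne_zero (hN2 k).index_ne_zero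
  refine ⟨Fin (n+1) ⊕ Σ k : Fin n, G (idx k) ⧸ N k, inferInstance,
    Monoid.CoprodI.lift (fun i => alphaHom idx g N hN3 chain i), ?_⟩
  intro hone
  have He := phi_eval idx g N hN3 chain n 0 (by omega) (by omega)
  rw [List.drop_zero] at He
  have hml : (List.finRange n).map (fun k => Monoid.CoprodI.of (g k))
      = l.map fun p => Monoid.CoprodI.of p.2 := by
    conv_rhs => rw [← List.map_get_finRange l]
    rw [List.map_map]
    rfl
  rw [hml] at He
  have hxe : (l.map fun p => Monoid.CoprodI.of p.2).prod = x := hprod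
  rw [hxe, hone] at He
  have : Fin.last n = ⟨0, by omega⟩ := by simpa using He
  have := congrArg Fin.val this
  simp at this
  omega

universe u v

private abbrev Fam (G₁ : Type u) (G₂ : Type v) : Bool → Type (max u v) :=
  fun b => cond b (ULift.{v} G₁) (ULift.{u} G₂)

variable (G₁ : Type u) (G₂ : Type v) [Group G₁] [Group G₂]

private instance famGroup : ∀ b, Group (Fam G₁ G₂ b) := fun b =>
  Bool.rec (motive := fun b => Group (Fam G₁ G₂ b))
    (inferInstanceAs (Group (ULift.{u} G₂))) (inferInstanceAs (Group (ULift.{v} G₁))) b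

private def up₁ : G₁ →* Fam G₁ G₂ true := MonoidHom.mk' (fun a => ULift.up a) (fun _ _ => rfl)
private def up₂ : G₂ →* Fam G₁ G₂ false := MonoidHom.mk' (fun a => ULift.up a) (fun _ _ => rfl)
private def down₁ : Fam G₁ G₂ true →* G₁ := MonoidHom.mk' (fun a => a.down) (fun _ _ => rfl)
private def down₂ : Fam G₁ G₂ false →* G₂ := MonoidHom.mk' (fun a => a.down) (fun _ _ => rfl)

private def toHom : Monoid.Coprod G₁ G₂ →* Monoid.CoprodI (Fam G₁ G₂) :=
  Monoid.Coprod.lift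
    ((Monoid.CoprodI.of (M := Fam G₁ G₂) (i := true)).comp (up₁ G₁ G₂))
    ((Monoid.CoprodI.of (M := Fam G₁ G₂) (i := false)).comp (up₂ G₁ G₂))

private def backHom : Monoid.CoprodI (Fam G₁ G₂) →* Monoid.Coprod G₁ G₂ :=
  Monoid.CoprodI.lift (fun b => Bool.rec
    (motive := fun b => Fam G₁ G₂ b →* Monoid.Coprod G₁ G₂)
    ((Monoid.Coprod.inr (M := G₁)).comp (down₂ G₁ G₂))
    ((Monoid.Coprod.inl (N := G₂)).comp (down₁ G₁ G₂)) b)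

private lemma back_toHom (x : Monoid.Coprod G₁ G₂) : backHom G₁ G₂ (toHom G₁ G₂ x) = x := by
  have h : (backHom G₁ G₂).comp (toHom G₁ G₂) = MonoidHom.id _ := by
    apply Monoid.Coprod.hom_ext
    · ext a
      show backHom G₁ G₂ (toHom G₁ G₂ (Monoid.Coprod.inl a)) = Monoid.Coprod.inl a
      rw [toHom, Monoid.Coprod.lift_apply_inl, MonoidHom.comp_apply, backHom,
        Monoid.CoprodI.lift_of]
      rfl
    · ext a
      show backHom G₁ G₂ (toHom G₁ G₂ (Monoid.Coprod.inr a)) = Monoid.Coprod.inr a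
      rw [toHom, Monoid.Coprod.lift_apply_inr, MonoidHom.comp_apply, backHom,
        Monoid.CoprodI.lift_of]
      rfl
  exact DFunLike.congr_fun h x


private lemma rfOfInjSurj {H : Type*} [Group H] (hH : ResiduallyFinite H)
    {K : Type*} [Group K] (f : K →* H) (hsurj : Function.Surjective f)
    (hinj : Function.Injective f) (g : K) (hgne : g ≠ 1) :
    ∃ N : Subgroup K, N.Normal ∧ N.FiniteIndex ∧ g ∉ N := by
  have hfg : f g ≠ 1 := fun h => hgne (hinj (by rw [h, map_one]))
  obtain ⟨N, hN, hFI, hmem⟩ := hH (f g) hfg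
  refine ⟨N.comap f, hN.comap f, ⟨?_⟩, ?_⟩
  · rw [Subgroup.index_comap_of_surjective (H := N) (f := f) hsurj]
    exact hFI.index_ne_zero
  · simpa [Subgroup.mem_comap] using hmem

private lemma famRF (h₁ : ResiduallyFinite G₁) (h₂ : ResiduallyFinite G₂) :
    ∀ b, ∀ g : Fam G₁ G₂ b, g ≠ 1 →
      ∃ N : Subgroup (Fam G₁ G₂ b), N.Normal ∧ N.FiniteIndex ∧ g ∉ N := by
  intro b
  cases b
  · exact rfOfInjSurj h₂ (down₂ G₁ G₂) (fun a => ⟨ULift.up a, rfl⟩)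
      (fun a b h => ULift.ext _ _ h)
  · exact rfOfInjSurj h₁ (down₁ G₁ G₂) (fun a => ⟨ULift.up a, rfl⟩)
      (fun a b h => ULift.ext _ _ h)

/-- Gruenberg: A free product of two residually finite groups is
residually finite. -/
theorem freeProduct_residuallyFinite
    (G₁ G₂ : Type*) [Group G₁] [Group G₂]
    (h₁ : ResiduallyFinite G₁) (h₂ : ResiduallyFinite G₂) :
    ResiduallyFinite (Monoid.Coprod G₁ G₂) := by
  intro x hx
  have hx' : toHom G₁ G₂ x ≠ 1 := by
    intro h
    apply hx
    have hb := back_toHom G₁ G₂ x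
    rw [h, map_one] at hb
    exact hb.symm
  obtain ⟨X, hXf, f, hf⟩ := exists_perm_hom (Fam G₁ G₂) (famRF G₁ G₂ h₁ h₂) hx'
  haveI := hXf
  refine ⟨(f.comp (toHom G₁ G₂)).ker, MonoidHom.normal_ker _, Subgroup.finiteIndex_ker _, ?_⟩
  intro hmem
  rw [MonoidHom.mem_ker, MonoidHom.comp_apply] at hmem
  exact hf hmem
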